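/- For all positive integers n and d, the subset M = {(k,1,…,1), (1,k,1,…,1), …, (1,…,1,k) : k ∈ [n]} of [n]^d (all points having at most one coordinate different from 1) is basic and has exactly d·n − (d−1) elements; hence the bound |M| ≤ d·n − (d−1) for basic subsets cannot be improved. -/

import Mathlib

/-- A finite subset `M ⊆ [n]^d` (the cube identified with `Fin d → Fin n`) is *basic*
if every function on `M` decomposes as a sum of univariate functions. -/
def IsBasic {n d : ℕ} (M : Finset (Fin d → Fin n)) : Prop :=
  ∀ f : (Fin d → Fin n) → ℝ, ∃ g : Fin d → Fin n → ℝ,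
    ∀ x ∈ M, f x = ∑ i, g i (x i)

/-- The set of points of `[n]^d` having at most one coordinate different from `1`
(in `Fin n`, value `1` is the index `0`) is basic and has exactly `d·n − (d−1)` elements,
so the bound for basic subsets cannot be improved. -/
theorem isBasic_cross_and_card (n d : ℕ) (hn : 0 < n) (hd : 0 < d) :
    IsBasic (Finset.univ.filter
        (fun x : Fin d → Fin n => ∃ i : Fin d, ∀ j, j ≠ i → (x j : ℕ) = 0)) ∧
      (Finset.univ.filter
        (fun x : Fin d → Fin n => ∃ i : Fin d, ∀ j, j ≠ i → (x j : ℕ) = 0)).card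
        = d * n - (d - 1) := by
  set z : Fin n := ⟨0, hn⟩ with hz
  set zf : Fin d → Fin n := fun _ => z with hzf
  have hxz : ∀ (x : Fin d → Fin n) (i : Fin d), (∀ j, j ≠ i → (x j : ℕ) = 0) →
      x = Function.update zf i (x i) := by
    intro x i h
    funext j
    by_cases hj : j = i
    · subst hj; simp [Function.update]
    · rw [Function.update_of_ne hj]
      exact Fin.ext (h j hj)
  constructor
  · intro f
    refine ⟨fun i k => f (Function.update zf i k) - f zf + f zf / d, ?_⟩
    intro x hx
    simp only [Finset.mem_filter] at hx
    obtain ⟨-, i, hi⟩ := hx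
    have hx' := hxz x i hi
    have hsum : ∀ j, (f (Function.update zf j (x j)) - f zf + f zf / d) =
        (if j = i then f x - f zf else 0) + f zf / d := by
      intro j
      by_cases hj : j = i
      · subst hj; rw [← hx']; simp
      · have : Function.update zf j (x j) = zf := by
          funext l
          by_cases hl : l = j
          · subst hl; simp [Function.update, Fin.ext_iff, hi l hj, hzf, hz]
          · rw [Function.update_of_ne hl]
        simp [hj, this]
    rw [Finset.sum_congr rfl (fun j _ => hsum j), Finset.sum_add_distrib,
      Finset.sum_ite_eq' Finset.univ i]
    have hd' : (d : ℝ) ≠ 0 := Nat.cast_ne_zero.mpr hd.ne'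
    simp [Finset.card_univ, mul_div_assoc]
    field_simp
    ring
  · have key : (Finset.univ.filter
        (fun x : Fin d → Fin n => ∃ i : Fin d, ∀ j, j ≠ i → (x j : ℕ) = 0)) =
        insert zf (((Finset.univ : Finset (Fin d)) ×ˢ
          (Finset.univ.filter (fun k : Fin n => k ≠ z))).image
          (fun p => Function.update zf p.1 p.2)) := by
      ext x
      simp only [Finset.mem_filter, Finset.mem_univ, true_and, Finset.mem_insert,
        Finset.mem_image, Finset.mem_product, Finset.mem_filter]
      constructor
      · rintro ⟨i, hi⟩
        by_cases hxi : x i = z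
        · left
          funext j
          by_cases hj : j = i
          · subst hj; exact hxi
          · exact Fin.ext (hi j hj)
        · right
          exact ⟨(i, x i), by simp [hxi], (hxz x i hi).symm⟩
      · rintro (rfl | ⟨⟨i, k⟩, -, rfl⟩)
        · exact ⟨⟨0, hd⟩, fun j _ => rfl⟩
        · refine ⟨i, fun j hj => ?_⟩
          rw [Function.update_of_ne hj]
    rw [key, Finset.card_insert_of_notMem, Finset.card_image_of_injOn]
    · rw [Finset.card_product, Finset.card_univ, Fintype.card_fin,
        Finset.filter_ne', Finset.card_erase_of_mem (Finset.mem_univ z),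
        Finset.card_univ, Fintype.card_fin]
      have : d * n = d * (n - 1) + d := by
        have : n - 1 + 1 = n := Nat.succ_pred_eq_of_pos hn
        nlinarith [this]
      omega
    · rintro ⟨i, k⟩ hik ⟨i', k'⟩ hik' h
      simp only [Finset.mem_coe, Finset.mem_product, Finset.mem_filter] at hik hik'
      have hkk : k ≠ z := hik.2.2
      have hi : i = i' := by
        by_contra hne
        have := congrFun h i
        simp only [Function.update_self] at this
        rw [Function.update_of_ne hne] at this
        exact hkk this
      subst hi
      have := congrFun h i
      simp only [Function.update_self] at this
      exact Prod.ext rfl this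
    · rintro hmem
      rw [Finset.mem_image] at hmem
      obtain ⟨⟨i, k⟩, hik, h⟩ := hmem
      simp only [Finset.mem_product, Finset.mem_filter] at hik
      have := congrFun h i
      simp only [Function.update_self] at this
      exact hik.2.2 this
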